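/- Let n ≥ 1, let c ∈ Σⁿ, and let r be an integer with 0 ≤ r ≤ 2n. Then the number of vectors x ∈ Σⁿ with d_G(c, x) = r equals Σ_{i = max(0, r−n)}^{⌊r/2⌋} n!/(i!·(r−2i)!·(n−r+i)!) · 9^i · 6^{r−2i}. -/

import Mathlib

/-- The DNA pair alphabet Σ = Fin 4 × Fin 4 (A,G,C,T encoded as 0,1,2,3). -/
abbrev Sig := Fin 4 × Fin 4

/-- The Gau distance on Σⁿ:
d_G(x,y) = Σⱼ (δ(xⱼ.1, yⱼ.1) + δ(xⱼ.2, yⱼ.2)), where δ(u,v) = 0 if u = v, else 1. -/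
def dG (n : ℕ) (x y : Fin n → Sig) : ℕ :=
  ∑ j, ((if (x j).1 = (y j).1 then 0 else 1) + (if (x j).2 = (y j).2 then 0 else 1))

open Polynomial Finset

lemma sum_pow_delta (b : Fin 4) :
    ∑ u : Fin 4, (X : ℕ[X]) ^ (if b = u then 0 else 1) = 1 + C 3 * X := by
  fin_cases b <;> simp [Fin.sum_univ_four, C_eq_natCast] <;> ring

lemma gf (n : ℕ) (c : Fin n → Sig) :
    ∑ x : Fin n → Sig, (X : ℕ[X]) ^ (dG n c x) = ((1 + C 3 * X) ^ 2) ^ n := by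
  have h1 : ∀ x : Fin n → Sig, (X : ℕ[X]) ^ dG n c x =
      ∏ j, ((X : ℕ[X]) ^ (if (c j).1 = (x j).1 then 0 else 1) *
        X ^ (if (c j).2 = (x j).2 then 0 else 1)) := by
    intro x
    rw [dG, ← Finset.prod_pow_eq_pow_sum]
    exact Finset.prod_congr rfl fun j _ => by rw [← pow_add]
  simp_rw [h1]
  have h2 := Finset.prod_univ_sum (fun _ : Fin n => (univ : Finset Sig))
    (fun j a => (X : ℕ[X]) ^ (if (c j).1 = a.1 then 0 else 1) *
      X ^ (if (c j).2 = a.2 then 0 else 1))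
  rw [Fintype.piFinset_univ] at h2
  rw [← h2]
  have hfac : ∀ j : Fin n, (∑ a : Sig, (X : ℕ[X]) ^ (if (c j).1 = a.1 then 0 else 1) *
      X ^ (if (c j).2 = a.2 then 0 else 1)) = (1 + C 3 * X) ^ 2 := by
    intro j
    rw [Fintype.sum_prod_type]
    simp only []
    have hs := Finset.sum_mul_sum (Finset.univ : Finset (Fin 4)) (Finset.univ : Finset (Fin 4))
      (fun u => (X : ℕ[X]) ^ (if (c j).1 = u then 0 else 1))
      (fun v => (X : ℕ[X]) ^ (if (c j).2 = v then 0 else 1))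
    rw [← hs, sum_pow_delta, sum_pow_delta, sq]
  rw [Finset.prod_congr rfl fun j _ => hfac j, Finset.prod_const, card_univ, Fintype.card_fin]

lemma card_eq_coeff (n : ℕ) (c : Fin n → Sig) (r : ℕ) :
    (Finset.univ.filter fun x : Fin n → Sig => dG n c x = r).card =
      (((1 + C 3 * X : ℕ[X]) ^ 2) ^ n).coeff r := by
  rw [← gf n c, Polynomial.finset_sum_coeff, Finset.card_filter]
  refine Finset.sum_congr rfl fun x _ => ?_
  rw [Polynomial.coeff_X_pow]
  by_cases h : dG n c x = r
  · simp [h]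
  · simp [h, Ne.symm h]

lemma coeff_aux (k m : ℕ) :
    ((C 6 + C 9 * X : ℕ[X]) ^ k).coeff m =
      if m ≤ k then 9 ^ m * 6 ^ (k - m) * k.choose m else 0 := by
  rw [add_comm (C 6 : ℕ[X]) _, add_pow, Polynomial.finset_sum_coeff]
  have ht : ∀ j, ((C 9 * X : ℕ[X]) ^ j * C 6 ^ (k - j) * (k.choose j : ℕ[X]))
      = C (9 ^ j * 6 ^ (k - j) * k.choose j) * X ^ j := by
    intro j
    rw [mul_pow, ← C_pow, ← C_pow, ← C_eq_natCast, C_mul, C_mul]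
    push_cast
    ring
  simp_rw [ht, Polynomial.coeff_C_mul, Polynomial.coeff_X_pow, mul_ite, mul_one, mul_zero]
  rw [Finset.sum_ite_eq]
  simp [Nat.lt_succ_iff]

lemma coeff_Qk (k r : ℕ) :
    ((C 6 * X + C 9 * X ^ 2 : ℕ[X]) ^ k).coeff r =
      if k ≤ r ∧ r - k ≤ k then 9 ^ (r - k) * 6 ^ (k - (r - k)) * k.choose (r - k) else 0 := by
  have hQ : (C 6 * X + C 9 * X ^ 2 : ℕ[X]) = (C 6 + C 9 * X) * X := by ring
  rw [hQ, mul_pow, Polynomial.coeff_mul_X_pow', coeff_aux]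
  split_ifs with h1 h2 h3 h4 <;> first | rfl | omega | (exfalso; omega)

lemma coeff_main (n r : ℕ) (hr : r ≤ 2 * n) :
    (((1 + C 3 * X : ℕ[X]) ^ 2) ^ n).coeff r =
      ∑ i ∈ Finset.Icc (r - n) (r / 2),
        n.choose i * (n - i).choose (r - 2 * i) * 9 ^ i * 6 ^ (r - 2 * i) := by
  have h2 : ((1 + C 3 * X : ℕ[X]) ^ 2) = (C 6 * X + C 9 * X ^ 2) + 1 := by
    simp only [map_ofNat]
    ring
  rw [h2, add_pow, Polynomial.finset_sum_coeff]
  have ht : ∀ k ∈ Finset.range (n + 1),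
      ((C 6 * X + C 9 * X ^ 2 : ℕ[X]) ^ k * 1 ^ (n - k) * (n.choose k : ℕ[X])).coeff r
      = if k ≤ r ∧ r - k ≤ k then
          9 ^ (r - k) * 6 ^ (k - (r - k)) * k.choose (r - k) * n.choose k else 0 := by
    intro k _
    rw [one_pow, mul_one, ← C_eq_natCast, Polynomial.coeff_mul_C, coeff_Qk]
    split_ifs <;> simp
  rw [Finset.sum_congr rfl ht, ← Finset.sum_filter]
  refine Finset.sum_nbij' (fun k => r - k) (fun i => r - i) ?_ ?_ ?_ ?_ ?_
  · intro k hk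
    simp only [Finset.mem_filter, Finset.mem_range] at hk
    simp only [Finset.mem_Icc]
    omega
  · intro i hi
    simp only [Finset.mem_Icc] at hi
    simp only [Finset.mem_filter, Finset.mem_range]
    omega
  · intro k hk
    simp only [Finset.mem_filter, Finset.mem_range] at hk
    omega
  · intro i hi
    simp only [Finset.mem_Icc] at hi
    omega
  · intro k hk
    simp only [Finset.mem_filter, Finset.mem_range] at hk
    obtain ⟨hkn, hkr, hrk⟩ := hk
    have e1 : k - (r - k) = r - 2 * (r - k) := by omega
    have chooseeq : k.choose (r - k) * n.choose k
        = n.choose (r - k) * (n - (r - k)).choose (r - 2 * (r - k)) := by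
      rw [mul_comm, Nat.choose_mul hrk, e1]
    rw [e1, mul_assoc, chooseeq]
    ring

lemma multinomial_eq (n r i : ℕ) (hi : r - n ≤ i) (h2 : i ≤ r / 2) (hr : r ≤ 2 * n) :
    n.factorial / (i.factorial * (r - 2 * i).factorial * (n + i - r).factorial)
      = n.choose i * (n - i).choose (r - 2 * i) := by
  have hin : i ≤ n := by omega
  have hrn : r - 2 * i ≤ n - i := by omega
  have e1 := Nat.choose_mul_factorial_mul_factorial hin
  have e2 := Nat.choose_mul_factorial_mul_factorial hrn
  have e3 : n - i - (r - 2 * i) = n + i - r := by omega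
  rw [e3] at e2
  have key : n.choose i * (n - i).choose (r - 2 * i)
      * (i.factorial * (r - 2 * i).factorial * (n + i - r).factorial) = n.factorial := by
    calc n.choose i * (n - i).choose (r - 2 * i)
        * (i.factorial * (r - 2 * i).factorial * (n + i - r).factorial)
        = (n.choose i * i.factorial)
          * ((n - i).choose (r - 2 * i) * (r - 2 * i).factorial * (n + i - r).factorial) := by
          ring
      _ = n.choose i * i.factorial * (n - i).factorial := by rw [e2]
      _ = n.factorial := by rw [← e1]
  have pos : 0 < i.factorial * (r - 2 * i).factorial * (n + i - r).factorial := by positivity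
  rw [← key, Nat.mul_div_cancel _ pos]


/-- the number of x ∈ Σⁿ at Gau distance exactly r from a fixed c ∈ Σⁿ is
Σ_{i = max(0, r−n)}^{⌊r/2⌋} n!/(i!·(r−2i)!·(n−r+i)!)·9^i·6^{r−2i}. -/
theorem gau_sphere_count (n : ℕ) (hn : 1 ≤ n) (c : Fin n → Sig) (r : ℕ) (hr : r ≤ 2 * n) :
    (Finset.univ.filter fun x : Fin n → Sig => dG n c x = r).card =
      ∑ i ∈ Finset.Icc (r - n) (r / 2),
        n.factorial / (i.factorial * (r - 2 * i).factorial * (n + i - r).factorial) *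
          9 ^ i * 6 ^ (r - 2 * i) := by
  rw [card_eq_coeff, coeff_main n r hr]
  refine Finset.sum_congr rfl fun i hi => ?_
  simp only [Finset.mem_Icc] at hi
  rw [multinomial_eq n r i hi.1 hi.2 hr]
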